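/- For every integer s ≥ 1, the antisymmetric bilinear map β : ℝ^{s+1} × ℝ^{s+1} → ℝ^s defined by β(u, v)_k = u₁ v_{k+1} − u_{k+1} v₁ for k = 1, …, s is surjective on isotropic loops. -/

import Mathlib

open MeasureTheory Topology ENNReal Filter

/-- `ℝ^n` with the Euclidean norm. -/
abbrev Euc (n : ℕ) : Type := EuclideanSpace ℝ (Fin n)

/-- `ℝ^{mn} = (ℝ^m)^n` with the Euclidean norm; a point `u` has components
`u_j = (u (j, ·)) ∈ ℝ^m`, `j = 1, …, n`. -/
abbrev EucN (m n : ℕ) : Type := EuclideanSpace ℝ (Fin n × Fin m)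

/-- The norm of the wedge of two vectors:
`|u ∧ v| = (|u|²|v|² − ⟨u,v⟩²)^{1/2}`. -/
noncomputable def wedgeNorm {V : Type*} [NormedAddCommGroup V] [InnerProductSpace ℝ V]
    (u v : V) : ℝ :=
  Real.sqrt (‖u‖ ^ 2 * ‖v‖ ^ 2 - (inner ℝ u v : ℝ) ^ 2)

/-- The `ℝ^s`-valued multi-symplectic form on `ℝ^{mn}` associated with an antisymmetric
bilinear map `β : ℝ^m × ℝ^m → ℝ^s`: `ω(u,v) = Σ_{j} β(u_j, v_j)`. -/
noncomputable def msymp {m s : ℕ} (β : Euc m →L[ℝ] Euc m →L[ℝ] Euc s) (n : ℕ)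
    (u v : EucN m n) : Euc s :=
  ∑ j : Fin n, β (WithLp.toLp 2 (fun i => u (j, i))) (WithLp.toLp 2 (fun i => v (j, i)))

/-- The point `e^{2πit} = (cos 2πt, sin 2πt)` of the unit circle `S¹ ⊂ ℝ²`. -/
noncomputable def circlePt (t : ℝ) : Euc 2 :=
  (WithLp.equiv 2 (Fin 2 → ℝ)).symm ![Real.cos (2 * Real.pi * t), Real.sin (2 * Real.pi * t)]

/-- `β : ℝ^m × ℝ^m → ℝ^s` (antisymmetric bilinear) is surjective on isotropic loops with
constant `C > 0`: for every `λ > 0` and every `σ ∈ L^∞((0,1), ℝ^s)` with `∫₀¹ σ = 0`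
there are a Lipschitz loop `a : [0,1] → ℝ^m` with `β(a, a') = σ` a.e., `|a(0)| ≤ Cλ`,
`|a'| ≤ (C/λ)|σ|` a.e., and a Lipschitz isotropic homotopy `G : [0,1]² → ℝ^m` carrying
`a` to a point, with `Lip(G) ≤ C(λ + ‖σ‖_∞/λ)` and swept area
`∬ |∂_τG ∧ ∂_tG| ≤ C (∫₀¹|a'|)²`. -/
noncomputable def SurjOnIsotropicLoops {m s : ℕ}
    (β : Euc m →L[ℝ] Euc m →L[ℝ] Euc s) (C : ℝ) : Prop :=
  0 < C ∧
  ∀ lam : ℝ, 0 < lam →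
  ∀ σ : ℝ → Euc s,
    MemLp σ ⊤ (volume.restrict (Set.Ioo (0 : ℝ) 1)) →
    (∫ t in (0 : ℝ)..1, σ t) = 0 →
  ∃ (A : ℝ → Euc m) (G : ℝ × ℝ → Euc m) (Ka KG : NNReal),
    LipschitzOnWith Ka A (Set.Icc (0 : ℝ) 1) ∧
    A 0 = A 1 ∧
    ‖A 0‖ ≤ C * lam ∧
    (∀ᵐ t ∂ volume.restrict (Set.Ioo (0 : ℝ) 1),
      DifferentiableAt ℝ A t ∧ β (A t) (deriv A t) = σ t ∧
      ‖deriv A t‖ ≤ (C / lam) * ‖σ t‖) ∧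
    LipschitzOnWith KG G (Set.Icc (0 : ℝ) 1 ×ˢ Set.Icc (0 : ℝ) 1) ∧
    (KG : ℝ) ≤ C * (lam + (eLpNorm σ ⊤ (volume.restrict (Set.Ioo (0 : ℝ) 1))).toReal / lam) ∧
    (∀ τ ∈ Set.Icc (0 : ℝ) 1, G (τ, 0) = A τ) ∧
    (∀ τ ∈ Set.Icc (0 : ℝ) 1, ∀ τ' ∈ Set.Icc (0 : ℝ) 1, G (τ, 1) = G (τ', 1)) ∧
    (∀ t ∈ Set.Icc (0 : ℝ) 1, G (0, t) = G (1, t)) ∧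
    (∀ᵐ p ∂ (volume : Measure (ℝ × ℝ)).restrict (Set.Ioo (0 : ℝ) 1 ×ˢ Set.Ioo (0 : ℝ) 1),
      DifferentiableAt ℝ G p ∧
      β (fderiv ℝ G p (1, 0)) (fderiv ℝ G p (0, 1)) = 0) ∧
    (∫ p in Set.Ioo (0 : ℝ) 1 ×ˢ Set.Ioo (0 : ℝ) 1,
        wedgeNorm (fderiv ℝ G p (1, 0)) (fderiv ℝ G p (0, 1)))
      ≤ C * (∫ t in (0 : ℝ)..1, ‖deriv A t‖) ^ 2

/-! ### Auxiliary machinery -/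

section Aux

variable {E : Type*} [NormedAddCommGroup E] [NormedSpace ℝ E] [CompleteSpace E]

lemma slope_bound_right {f : ℝ → E} (hf : Integrable f volume) (x y : ℝ) (hxy : x < y) :
    ‖slope (fun u => ∫ t in (0:ℝ)..u, f t) x y - f x‖
      ≤ ⨍ t in Set.Icc x y, ‖f t - f x‖ := by
  have hyx : (0:ℝ) < y - x := by linarith
  have hne : (y - x) ≠ 0 := ne_of_gt hyx
  have hii : ∀ a b : ℝ, IntervalIntegrable f volume a b := fun a b => hf.intervalIntegrable
  have h1 : (∫ t in (0:ℝ)..y, f t) - (∫ t in (0:ℝ)..x, f t) = ∫ t in x..y, f t :=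
    intervalIntegral.integral_interval_sub_left (hii 0 y) (hii 0 x)
  have h2 : slope (fun u => ∫ t in (0:ℝ)..u, f t) x y - f x
      = (y - x)⁻¹ • ∫ t in x..y, (f t - f x) := by
    rw [intervalIntegral.integral_sub (hii x y) (intervalIntegrable_const),
      intervalIntegral.integral_const, slope, vsub_eq_sub, h1, smul_sub, smul_smul,
      inv_mul_cancel₀ hne, one_smul]
  rw [h2, norm_smul, norm_inv, Real.norm_of_nonneg hyx.le]
  have h3 : ‖∫ t in x..y, (f t - f x)‖ ≤ ∫ t in x..y, ‖f t - f x‖ :=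
    intervalIntegral.norm_integral_le_integral_norm hxy.le
  have h4 : (∫ t in x..y, ‖f t - f x‖) = ∫ t in Set.Icc x y, ‖f t - f x‖ := by
    rw [intervalIntegral.integral_of_le hxy.le, setIntegral_congr_set Ioc_ae_eq_Icc]
  rw [setAverage_eq, Real.volume_real_Icc_of_le hxy.le, smul_eq_mul, ← h4]
  exact mul_le_mul_of_nonneg_left h3 (by positivity)

lemma slope_bound_left {f : ℝ → E} (hf : Integrable f volume) (x y : ℝ) (hxy : y < x) :
    ‖slope (fun u => ∫ t in (0:ℝ)..u, f t) x y - f x‖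
      ≤ ⨍ t in Set.Icc y x, ‖f t - f x‖ := by
  have hyx : (0:ℝ) < x - y := by linarith
  have hne : (x - y) ≠ 0 := ne_of_gt hyx
  have hii : ∀ a b : ℝ, IntervalIntegrable f volume a b := fun a b => hf.intervalIntegrable
  have h1 : (∫ t in (0:ℝ)..x, f t) - (∫ t in (0:ℝ)..y, f t) = ∫ t in y..x, f t :=
    intervalIntegral.integral_interval_sub_left (hii 0 x) (hii 0 y)
  have h2 : slope (fun u => ∫ t in (0:ℝ)..u, f t) x y - f x
      = (x - y)⁻¹ • ∫ t in y..x, (f t - f x) := by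
    rw [slope_comm, intervalIntegral.integral_sub (hii y x) (intervalIntegrable_const),
      intervalIntegral.integral_const, slope, vsub_eq_sub, h1, smul_sub, smul_smul,
      inv_mul_cancel₀ hne, one_smul]
  rw [h2, norm_smul, norm_inv, Real.norm_of_nonneg hyx.le]
  have h3 : ‖∫ t in y..x, (f t - f x)‖ ≤ ∫ t in y..x, ‖f t - f x‖ :=
    intervalIntegral.norm_integral_le_integral_norm hxy.le
  have h4 : (∫ t in y..x, ‖f t - f x‖) = ∫ t in Set.Icc y x, ‖f t - f x‖ := by
    rw [intervalIntegral.integral_of_le hxy.le, setIntegral_congr_set Ioc_ae_eq_Icc]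
  rw [setAverage_eq, Real.volume_real_Icc_of_le hxy.le, smul_eq_mul, ← h4]
  exact mul_le_mul_of_nonneg_left h3 (by positivity)

/-- Almost-everywhere fundamental theorem of calculus for an integrable function. -/
lemma ae_hasDerivAt_primitive {f : ℝ → E} (hf : Integrable f volume) :
    ∀ᵐ x ∂(volume : Measure ℝ), HasDerivAt (fun u => ∫ t in (0:ℝ)..u, f t) (f x) x := by
  have hloc : LocallyIntegrable f volume := hf.locallyIntegrable
  filter_upwards [(IsUnifLocDoublingMeasure.vitaliFamily (volume : Measure ℝ)
      1).ae_tendsto_average_norm_sub hloc] with x hx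
  rw [hasDerivAt_iff_tendsto_slope,
    show (𝓝[≠] x) = 𝓝[<] x ⊔ 𝓝[>] x by rw [nhdsLT_sup_nhdsGT], tendsto_sup]
  constructor
  · have hcomp := hx.comp (Real.tendsto_Icc_vitaliFamily_left x)
    rw [tendsto_iff_norm_sub_tendsto_zero]
    apply squeeze_zero' (Eventually.of_forall fun y => norm_nonneg _) ?_ hcomp
    filter_upwards [self_mem_nhdsWithin] with y (hy : y < x)
    exact slope_bound_left hf x y hy
  · have hcomp := hx.comp (Real.tendsto_Icc_vitaliFamily_right x)
    rw [tendsto_iff_norm_sub_tendsto_zero]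
    apply squeeze_zero' (Eventually.of_forall fun y => norm_nonneg _) ?_ hcomp
    filter_upwards [self_mem_nhdsWithin] with y (hy : x < y)
    exact slope_bound_right hf x y hy

end Aux

noncomputable def Jmap (s : ℕ) : Euc s →L[ℝ] Euc (s+1) :=
  LinearMap.toContinuousLinearMap
  { toFun := fun x => (WithLp.equiv 2 (Fin (s+1) → ℝ)).symm
      (Fin.cons 0 ((WithLp.equiv 2 (Fin s → ℝ)) x))
    map_add' := by intro x y; ext i; induction i using Fin.cases <;> simp
    map_smul' := by intro c x; ext i; induction i using Fin.cases <;> simp }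

@[simp] lemma Jmap_apply_zero (s : ℕ) (x : Euc s) : Jmap s x 0 = 0 := by simp [Jmap]

@[simp] lemma Jmap_apply_succ (s : ℕ) (x : Euc s) (k : Fin s) :
    Jmap s x k.succ = x k := by simp [Jmap]

lemma Jmap_norm (s : ℕ) (x : Euc s) : ‖Jmap s x‖ = ‖x‖ := by
  rw [EuclideanSpace.norm_eq, EuclideanSpace.norm_eq, Fin.sum_univ_succ]
  simp

lemma wedgeNorm_le {V : Type*} [NormedAddCommGroup V] [InnerProductSpace ℝ V]
    (u v : V) : wedgeNorm u v ≤ ‖u‖ * ‖v‖ := by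
  rw [wedgeNorm]
  calc Real.sqrt (‖u‖ ^ 2 * ‖v‖ ^ 2 - (inner ℝ u v : ℝ) ^ 2)
      ≤ Real.sqrt (‖u‖ ^ 2 * ‖v‖ ^ 2) := Real.sqrt_le_sqrt (sub_le_self _ (sq_nonneg _))
    _ = ‖u‖ * ‖v‖ := by
        rw [← mul_pow, Real.sqrt_sq (by positivity)]


set_option maxHeartbeats 1000000 in
/-- the bracket form of the 2-step algebra `𝔨_s` (generators
`X₁, …, X_{s+1}`, relations `[X₁, X_{k+1}] = Z_k`), namely
`β(u,v)_k = u₁v_{k+1} − u_{k+1}v₁`, is surjective on isotropic loops. -/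
theorem stmt11 (s : ℕ) (hs : 1 ≤ s)
    (β : Euc (s + 1) →L[ℝ] Euc (s + 1) →L[ℝ] Euc s)
    (hβ : ∀ u v : Euc (s + 1), ∀ k : Fin s,
      β u v k = u 0 * v k.succ - u k.succ * v 0) :
    ∃ C : ℝ, SurjOnIsotropicLoops β C := by
  refine ⟨2, by norm_num, ?_⟩
  intro lam hlam σ hσ hint
  set μ := volume.restrict (Set.Ioo (0 : ℝ) 1) with hμ
  set M := (eLpNorm σ ⊤ μ).toReal with hMdef
  have hM0 : 0 ≤ M := ENNReal.toReal_nonneg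
  set σ' : ℝ → Euc s := (Set.Ioo (0:ℝ) 1).indicator σ with hσ'def
  -- a.e. bound on σ'
  have hbM : ∀ᵐ t ∂(volume : Measure ℝ), ‖σ' t‖ ≤ M := by
    have h1 : ∀ᵐ t ∂μ, ‖σ t‖ ≤ M := by
      filter_upwards [ae_le_eLpNormEssSup (f := σ) (μ := μ)] with t ht
      have h2 : (‖σ t‖₊ : ℝ≥0∞).toReal ≤ (eLpNormEssSup σ μ).toReal :=
        ENNReal.toReal_mono (by rw [← eLpNorm_exponent_top]; exact hσ.2.ne) ht
      simpa [← eLpNorm_exponent_top, coe_nnnorm] using h2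
    have h3 := (ae_restrict_iff' measurableSet_Ioo).1 h1
    filter_upwards [h3] with t ht
    by_cases h : t ∈ Set.Ioo (0:ℝ) 1
    · rw [hσ'def, Set.indicator_of_mem h]; exact ht h
    · rw [hσ'def, Set.indicator_of_notMem h]; simpa using hM0
  have hσ'meas : AEStronglyMeasurable σ' volume :=
    (aestronglyMeasurable_indicator_iff measurableSet_Ioo).2 hσ.1
  have hσ'int : Integrable σ' volume := by
    refine Integrable.mono' (g := (Set.Ioo (0:ℝ) 1).indicator fun _ => M) ?_ hσ'meas ?_
    · rw [integrable_indicator_iff measurableSet_Ioo]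
      exact integrableOn_const (by simp [Real.volume_Ioo])
    · have h1 := (ae_restrict_iff' measurableSet_Ioo).1
        ((ae_le_eLpNormEssSup (f := σ) (μ := μ)).mono (fun t ht => ht))
      filter_upwards [hbM] with t ht
      by_cases h : t ∈ Set.Ioo (0:ℝ) 1
      · rw [Set.indicator_of_mem h]
        rw [hσ'def, Set.indicator_of_mem h] at ht ⊢
        exact ht
      · rw [Set.indicator_of_notMem h]
        rw [hσ'def, Set.indicator_of_notMem h]
        simp
  set F : ℝ → Euc s := fun u => ∫ t in (0:ℝ)..u, σ' t with hFdef
  have hF : ∀ᵐ x ∂(volume : Measure ℝ), HasDerivAt F (σ' x) x :=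
    ae_hasDerivAt_primitive hσ'int
  have hF0 : F 0 = 0 := intervalIntegral.integral_same
  have hF1 : F 1 = 0 := by
    have e1 : F 1 = ∫ t in Set.Ioo (0:ℝ) 1, σ' t := by
      simp only [hFdef]
      rw [intervalIntegral.integral_of_le zero_le_one,
        setIntegral_congr_set Ioo_ae_eq_Ioc.symm]
    have e2 : (∫ t in Set.Ioo (0:ℝ) 1, σ' t) = ∫ t in Set.Ioo (0:ℝ) 1, σ t := by
      refine setIntegral_congr_fun measurableSet_Ioo fun t ht => ?_
      rw [hσ'def, Set.indicator_of_mem ht]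
    have e3 : (∫ t in Set.Ioo (0:ℝ) 1, σ t) = ∫ t in (0:ℝ)..1, σ t := by
      rw [intervalIntegral.integral_of_le zero_le_one,
        setIntegral_congr_set Ioo_ae_eq_Ioc.symm]
    rw [e1, e2, e3, hint]
  -- global Lipschitz bound for F
  have hFd : ∀ x y : ℝ, ‖F x - F y‖ ≤ M * dist x y := by
    have key : ∀ x y : ℝ, x ≤ y → ‖F y - F x‖ ≤ M * (y - x) := by
      intro x y hxy
      have h1 : F y - F x = ∫ t in x..y, σ' t :=
        intervalIntegral.integral_interval_sub_left hσ'int.intervalIntegrable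
          hσ'int.intervalIntegrable
      rw [h1]
      calc ‖∫ t in x..y, σ' t‖ ≤ ∫ t in x..y, ‖σ' t‖ :=
            intervalIntegral.norm_integral_le_integral_norm hxy
        _ ≤ ∫ t in x..y, M := by
            apply intervalIntegral.integral_mono_ae hxy hσ'int.norm.intervalIntegrable
              intervalIntegrable_const
            exact hbM
        _ = M * (y - x) := by rw [intervalIntegral.integral_const, smul_eq_mul, mul_comm]
    intro x y
    rcases le_total x y with h | h
    · rw [norm_sub_rev, Real.dist_eq, abs_of_nonpos (by linarith)]
      simpa using key x y h
    · rw [Real.dist_eq, abs_of_nonneg (by linarith)]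
      exact key y x h
  set e0 : Euc (s+1) := EuclideanSpace.single 0 lam with he0def
  have he0norm : ‖e0‖ = lam := by
    rw [he0def, EuclideanSpace.norm_single, Real.norm_of_nonneg hlam.le]
  set A : ℝ → Euc (s+1) := fun t => e0 + lam⁻¹ • (Jmap s (F t)) with hAdef
  set G : ℝ × ℝ → Euc (s+1) :=
    fun p => e0 + ((1 - p.2) * lam⁻¹) • (Jmap s (F p.1)) with hGdef
  refine ⟨A, G, Real.toNNReal (M / lam), Real.toNNReal (2 * M / lam),
    ?_, ?_, ?_, ?_, ?_, ?_, ?_, ?_, ?_, ?_, ?_⟩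
  · -- Lipschitz of A
    rw [lipschitzOnWith_iff_dist_le_mul]
    intro x _ y _
    rw [Real.coe_toNNReal _ (by positivity), dist_eq_norm]
    have h1 : A x - A y = lam⁻¹ • Jmap s (F x - F y) := by
      rw [hAdef]; simp only [map_sub]
      rw [smul_sub]; abel
    rw [h1, norm_smul, Jmap_norm, norm_inv, Real.norm_of_nonneg hlam.le, div_eq_inv_mul,
      mul_assoc]
    exact mul_le_mul_of_nonneg_left (hFd x y) (by positivity)
  · -- A 0 = A 1
    rw [hAdef]; simp [hF0, hF1]
  · -- norm A 0
    rw [hAdef]; simp only [hF0]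
    rw [map_zero, smul_zero, add_zero, he0norm]
    nlinarith
  · -- a.e. derivative statement for A
    filter_upwards [ae_restrict_of_ae hF, ae_restrict_mem measurableSet_Ioo] with t hFt ht
    have hA : HasDerivAt A (lam⁻¹ • Jmap s (σ' t)) t :=
      (((Jmap s).hasFDerivAt.comp_hasDerivAt t hFt).const_smul lam⁻¹).const_add e0
    have hσt : σ' t = σ t := by rw [hσ'def, Set.indicator_of_mem ht]
    refine ⟨hA.differentiableAt, ?_, ?_⟩
    · rw [hA.deriv]
      ext k
      rw [hβ]
      have hA0 : A t 0 = lam := by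
        rw [hAdef]
        simp [he0def, EuclideanSpace.single_apply, PiLp.add_apply, PiLp.smul_apply]
      have hAk : A t k.succ = lam⁻¹ * F t k := by
        rw [hAdef]
        simp [he0def, EuclideanSpace.single_apply, PiLp.add_apply, PiLp.smul_apply,
          (Fin.succ_ne_zero k)]
      have hd0 : (lam⁻¹ • Jmap s (σ' t)) 0 = 0 := by
        simp [PiLp.smul_apply]
      have hdk : (lam⁻¹ • Jmap s (σ' t)) k.succ = lam⁻¹ * σ' t k := by
        simp [PiLp.smul_apply, smul_eq_mul]
      rw [hA0, hAk, hd0, hdk, hσt]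
      field_simp
      ring
    · rw [hA.deriv, norm_smul, Jmap_norm, norm_inv, Real.norm_of_nonneg hlam.le, hσt,
        div_eq_mul_inv, mul_comm (2:ℝ) lam⁻¹, mul_assoc]
      have : lam⁻¹ * ‖σ t‖ ≤ lam⁻¹ * (2 * ‖σ t‖) := by
        apply mul_le_mul_of_nonneg_left _ (by positivity)
        nlinarith [norm_nonneg (σ t)]
      simpa [mul_comm] using this
  · -- Lipschitz of G
    rw [lipschitzOnWith_iff_dist_le_mul]
    rintro p ⟨hp1, hp2⟩ q ⟨hq1, hq2⟩
    rw [Real.coe_toNNReal _ (by positivity), dist_eq_norm]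
    have key : G p - G q = ((1 - p.2) * lam⁻¹) • Jmap s (F p.1 - F q.1)
        + ((q.2 - p.2) * lam⁻¹) • Jmap s (F q.1) := by
      have hab : (q.2 - p.2) * lam⁻¹ = (1 - p.2) * lam⁻¹ - (1 - q.2) * lam⁻¹ := by ring
      simp only [hGdef]
      rw [hab, map_sub, smul_sub, sub_smul]
      abel
    rw [key]
    have hb1 : ‖((1 - p.2) * lam⁻¹) • Jmap s (F p.1 - F q.1)‖ ≤ lam⁻¹ * (M * dist p q) := by
      rw [norm_smul, Jmap_norm, Real.norm_eq_abs, abs_mul, abs_of_nonneg (by positivity :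
        (0:ℝ) ≤ lam⁻¹)]
      have h1 : |1 - p.2| ≤ 1 := by
        rw [abs_of_nonneg (by linarith [hp2.2] : (0:ℝ) ≤ 1 - p.2)]
        linarith [hp2.1]
      have hd1 : dist p.1 q.1 ≤ dist p q := by
        rw [Prod.dist_eq]; exact le_max_left _ _
      have h2 : ‖F p.1 - F q.1‖ ≤ M * dist p q :=
        le_trans (hFd p.1 q.1) (mul_le_mul_of_nonneg_left hd1 hM0)
      calc |1 - p.2| * lam⁻¹ * ‖F p.1 - F q.1‖ ≤ 1 * lam⁻¹ * (M * dist p q) := by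
            apply mul_le_mul _ h2 (norm_nonneg _) (by positivity)
            exact mul_le_mul_of_nonneg_right h1 (by positivity)
        _ = lam⁻¹ * (M * dist p q) := by ring
    have hb2 : ‖((q.2 - p.2) * lam⁻¹) • Jmap s (F q.1)‖ ≤ lam⁻¹ * (M * dist p q) := by
      rw [norm_smul, Real.norm_eq_abs, abs_mul, abs_of_nonneg (by positivity :
        (0:ℝ) ≤ lam⁻¹), Jmap_norm]
      have h2 : ‖F q.1‖ ≤ M := by
        have := hFd q.1 0
        rw [hF0, sub_zero, Real.dist_eq, sub_zero, abs_of_nonneg hq1.1] at this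
        exact le_trans this (by nlinarith [hq1.2])
      have h3 : |q.2 - p.2| ≤ dist p q := by
        have hd2 : dist p.2 q.2 ≤ dist p q := by
          rw [Prod.dist_eq]; exact le_max_right _ _
        rw [abs_sub_comm, ← Real.dist_eq]
        exact le_trans hd2 (le_refl _)

      calc |q.2 - p.2| * lam⁻¹ * ‖F q.1‖ ≤ dist p q * lam⁻¹ * M := by
            apply mul_le_mul _ h2 (norm_nonneg _) (by positivity)
            exact mul_le_mul_of_nonneg_right h3 (by positivity)
        _ = lam⁻¹ * (M * dist p q) := by ring
    calc ‖((1 - p.2) * lam⁻¹) • Jmap s (F p.1 - F q.1)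
          + ((q.2 - p.2) * lam⁻¹) • Jmap s (F q.1)‖
        ≤ ‖((1 - p.2) * lam⁻¹) • Jmap s (F p.1 - F q.1)‖
          + ‖((q.2 - p.2) * lam⁻¹) • Jmap s (F q.1)‖ := norm_add_le _ _
      _ ≤ lam⁻¹ * (M * dist p q) + lam⁻¹ * (M * dist p q) := add_le_add hb1 hb2
      _ = 2 * M / lam * dist p q := by field_simp; ring
  · -- KG bound
    rw [Real.coe_toNNReal _ (by positivity)]
    have : (0:ℝ) ≤ M / lam := by positivity
    have h2 : 2 * M / lam = 2 * (M / lam) := by ring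
    nlinarith
  · -- G(τ,0) = A τ
    intro τ _
    rw [hGdef, hAdef]; norm_num
  · -- G(τ,1) constant
    intro τ _ τ' _
    rw [hGdef]; norm_num
  · -- G(0,t) = G(1,t)
    intro t _
    rw [hGdef]; simp [hF0, hF1]
  · -- a.e. isotropy
    obtain ⟨N, hNsub, hNmeas, hNnull⟩ :=
      exists_measurable_superset_of_null (ae_iff.1 hF)
    have hfst : (volume : Measure (ℝ × ℝ)) (Prod.fst ⁻¹' N) = 0 := by
      rw [Measure.volume_eq_prod, ← Set.prod_univ, Measure.prod_prod, hNnull,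
        zero_mul]
    have hprod : ∀ᵐ p ∂(volume : Measure (ℝ × ℝ)), HasDerivAt F (σ' p.1) p.1 := by
      rw [ae_iff]
      exact measure_mono_null (fun p hp => hNsub hp) hfst
    filter_upwards [ae_restrict_of_ae hprod] with p hFp
    have hc : HasFDerivAt (fun q : ℝ × ℝ => (1 - q.2) * lam⁻¹)
        (lam⁻¹ • ((0 : ℝ × ℝ →L[ℝ] ℝ) - ContinuousLinearMap.snd ℝ ℝ ℝ)) p :=
      ((hasFDerivAt_const (1:ℝ) p).sub (hasFDerivAt_snd)).mul_const lam⁻¹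
    have hv : HasFDerivAt (fun q : ℝ × ℝ => Jmap s (F q.1))
        ((Jmap s).comp ((ContinuousLinearMap.smulRight (1 : ℝ →L[ℝ] ℝ) (σ' p.1)).comp
          (ContinuousLinearMap.fst ℝ ℝ ℝ))) p :=
      (Jmap s).hasFDerivAt.comp p ((hFp.hasFDerivAt).comp p hasFDerivAt_fst)
    have hG : HasFDerivAt G _ p := (hc.smul hv).const_add e0
    refine ⟨hG.differentiableAt, ?_⟩
    have h1 : fderiv ℝ G p (1, 0) = ((1 - p.2) * lam⁻¹) • Jmap s (σ' p.1) := by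
      rw [hG.fderiv]; simp
    have h2 : fderiv ℝ G p (0, 1) = (-lam⁻¹) • Jmap s (F p.1) := by
      rw [hG.fderiv]; simp
    rw [h1, h2]
    ext k
    rw [hβ]
    simp [PiLp.smul_apply]
  · -- area bound
    set I := ∫ t in Set.Ioo (0:ℝ) 1, ‖σ' t‖ with hIdef
    have hI0 : 0 ≤ I := setIntegral_nonneg measurableSet_Ioo fun t _ => norm_nonneg _
    -- value of the RHS integral
    have hderivA : (fun t => ‖deriv A t‖) =ᵐ[volume] fun t => lam⁻¹ * ‖σ' t‖ := by
      filter_upwards [hF] with t hFt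
      have hA : HasDerivAt A (lam⁻¹ • Jmap s (σ' t)) t :=
        (((Jmap s).hasFDerivAt.comp_hasDerivAt t hFt).const_smul lam⁻¹).const_add e0
      rw [hA.deriv, norm_smul, Jmap_norm, norm_inv, Real.norm_of_nonneg hlam.le]
    have hRHS : (∫ t in (0:ℝ)..1, ‖deriv A t‖) = lam⁻¹ * I := by
      rw [intervalIntegral.integral_of_le zero_le_one,
        integral_congr_ae (ae_restrict_of_ae hderivA),
        setIntegral_congr_set Ioo_ae_eq_Ioc.symm, hIdef, integral_const_mul]
    have hFI : ∀ x ∈ Set.Ioo (0:ℝ) 1, ‖F x‖ ≤ I := by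
      intro x hx
      have h1 : ‖F x‖ ≤ ∫ t in (0:ℝ)..x, ‖σ' t‖ :=
        intervalIntegral.norm_integral_le_integral_norm hx.1.le
      have h2 : (∫ t in (0:ℝ)..x, ‖σ' t‖) = ∫ t in Set.Ioc (0:ℝ) x, ‖σ' t‖ :=
        intervalIntegral.integral_of_le hx.1.le
      have h3 : (∫ t in Set.Ioc (0:ℝ) x, ‖σ' t‖) ≤ I := by
        rw [hIdef]
        refine setIntegral_mono_set hσ'int.norm.integrableOn ?_ ?_
        · exact Eventually.of_forall fun t => norm_nonneg _
        · refine HasSubset.Subset.eventuallyLE fun t ht => ?_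
          exact ⟨ht.1, lt_of_le_of_lt ht.2 hx.2⟩
      exact h1.trans (h2 ▸ h3)
    -- a.e. bound on the integrand
    obtain ⟨N, hNsub, hNmeas, hNnull⟩ :=
      exists_measurable_superset_of_null (ae_iff.1 hF)
    have hfst : (volume : Measure (ℝ × ℝ)) (Prod.fst ⁻¹' N) = 0 := by
      rw [Measure.volume_eq_prod, ← Set.prod_univ, Measure.prod_prod, hNnull, zero_mul]
    have hprod : ∀ᵐ p ∂(volume : Measure (ℝ × ℝ)), HasDerivAt F (σ' p.1) p.1 := by
      rw [ae_iff]
      exact measure_mono_null (fun p hp => hNsub hp) hfst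
    have hbnd : ∀ᵐ p ∂(volume : Measure (ℝ × ℝ)).restrict
        (Set.Ioo (0:ℝ) 1 ×ˢ Set.Ioo (0:ℝ) 1),
        wedgeNorm (fderiv ℝ G p (1, 0)) (fderiv ℝ G p (0, 1))
          ≤ (lam⁻¹ * ‖σ' p.1‖) * (lam⁻¹ * I) := by
      filter_upwards [ae_restrict_of_ae hprod,
        ae_restrict_mem (measurableSet_Ioo.prod measurableSet_Ioo)] with p hFp hp
      have hc : HasFDerivAt (fun q : ℝ × ℝ => (1 - q.2) * lam⁻¹)
          (lam⁻¹ • ((0 : ℝ × ℝ →L[ℝ] ℝ) - ContinuousLinearMap.snd ℝ ℝ ℝ)) p :=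
        ((hasFDerivAt_const (1:ℝ) p).sub (hasFDerivAt_snd)).mul_const lam⁻¹
      have hv : HasFDerivAt (fun q : ℝ × ℝ => Jmap s (F q.1))
          ((Jmap s).comp ((ContinuousLinearMap.smulRight (1 : ℝ →L[ℝ] ℝ) (σ' p.1)).comp
            (ContinuousLinearMap.fst ℝ ℝ ℝ))) p :=
        (Jmap s).hasFDerivAt.comp p ((hFp.hasFDerivAt).comp p hasFDerivAt_fst)
      have hG2 : HasFDerivAt G _ p := (hc.smul hv).const_add e0
      have h1 : fderiv ℝ G p (1, 0) = ((1 - p.2) * lam⁻¹) • Jmap s (σ' p.1) := by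
        rw [hG2.fderiv]; simp
      have h2 : fderiv ℝ G p (0, 1) = (-lam⁻¹) • Jmap s (F p.1) := by
        rw [hG2.fderiv]; simp
      rw [h1, h2]
      refine (wedgeNorm_le _ _).trans ?_
      have hu : ‖((1 - p.2) * lam⁻¹) • Jmap s (σ' p.1)‖ ≤ lam⁻¹ * ‖σ' p.1‖ := by
        rw [norm_smul, Jmap_norm, Real.norm_eq_abs, abs_mul,
          abs_of_nonneg (by positivity : (0:ℝ) ≤ lam⁻¹)]
        have h3 : |1 - p.2| ≤ 1 := by
          rw [abs_of_nonneg (by linarith [hp.2.2] : (0:ℝ) ≤ 1 - p.2)]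
          linarith [hp.2.1]
        calc |1 - p.2| * lam⁻¹ * ‖σ' p.1‖ ≤ 1 * lam⁻¹ * ‖σ' p.1‖ := by
              apply mul_le_mul_of_nonneg_right _ (norm_nonneg _)
              exact mul_le_mul_of_nonneg_right h3 (by positivity)
          _ = lam⁻¹ * ‖σ' p.1‖ := by ring
      have hw : ‖(-lam⁻¹) • Jmap s (F p.1)‖ ≤ lam⁻¹ * I := by
        rw [norm_smul, Jmap_norm, Real.norm_eq_abs, abs_neg,
          abs_of_nonneg (by positivity : (0:ℝ) ≤ lam⁻¹)]
        exact mul_le_mul_of_nonneg_left (hFI p.1 hp.1) (by positivity)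
      exact mul_le_mul hu hw (norm_nonneg _) (by positivity)
    have hgi : Integrable (fun p : ℝ × ℝ => (lam⁻¹ * ‖σ' p.1‖) * (lam⁻¹ * I))
        ((volume : Measure (ℝ × ℝ)).restrict (Set.Ioo (0:ℝ) 1 ×ˢ Set.Ioo (0:ℝ) 1)) := by
      rw [Measure.volume_eq_prod, ← Measure.prod_restrict]
      exact Integrable.mul_prod ((hσ'int.norm.const_mul lam⁻¹).restrict)
        (integrable_const _)
    have hle := integral_mono_of_nonneg
      (Eventually.of_forall fun p => Real.sqrt_nonneg _) hgi hbnd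
    refine hle.trans ?_
    have hval : (∫ p in Set.Ioo (0:ℝ) 1 ×ˢ Set.Ioo (0:ℝ) 1,
        (lam⁻¹ * ‖σ' p.1‖) * (lam⁻¹ * I)) = (lam⁻¹ * I) * (lam⁻¹ * I) := by
      rw [Measure.volume_eq_prod]
      rw [setIntegral_prod_mul (fun x => lam⁻¹ * ‖σ' x‖) (fun _ => lam⁻¹ * I)]
      rw [integral_const_mul, setIntegral_const, Real.volume_real_Ioo_of_le zero_le_one]
      norm_num
      exact Or.inl (Or.inl hIdef.symm)
    rw [hval, hRHS]
    nlinarith [sq_nonneg (lam⁻¹ * I)]
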